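/- Let A = 𝔽_q[T] and suppose f₀, (f₀)^{−1} ∈ A((u)) have expansions f₀ = Σ_{i≥0} a_i u^{(q−1)(r+i)+l} with a₀ = 1 and 1/f₀ = Σ_{i≥0} a'_i u^{(q−1)(−r+i)−l} with a'₀ = 1. Suppose (f_i)_{i≥0} is a family in A((u)) satisfying f_i = u^{(q−1)(r−i)+l} + O(u^{(q−1)(r+1)+l}), with uniqueness of such normal forms holding (any element of the span of the f_j with expansion u^{(q−1)(r−i)+l} + O(u^{(q−1)(r+1)+l}) equals f_i), and (g_s)_{s≥0} the analogous family for r = l = 0 (g_s = u^{−s(q−1)} + O(u^{q−1})). Then for all i ≥ 0: f_i = f₀ · Σ_{n+s=i} a'_n g_s. -/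

import Mathlib

lemma aux_mul_coeff_low {R : Type*} [CommRing R] (x y : HahnSeries ℤ R) (c d : ℤ)
    (hx : ∀ j < c, x.coeff j = 0) (hy : ∀ j < d, y.coeff j = 0) :
    ∀ m < c + d, (x * y).coeff m = 0 := by
  intro m hm
  by_contra h
  have hmem : m ∈ (x * y).support := h
  obtain ⟨j, hj, k, hk, hjk⟩ := Set.mem_add.mp (HahnSeries.support_mul_subset hmem)
  have hjc : c ≤ j := le_of_not_gt fun hc => hj (hx j hc)
  have hkd : d ≤ k := le_of_not_gt fun hc => hk (hy k hc)
  omega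

lemma aux_mul_single_coeff {R : Type*} [CommRing R] (x : HahnSeries ℤ R) (b m : ℤ) (u : R) :
    (x * HahnSeries.single b u).coeff m = x.coeff (m - b) * u := by
  have : m = (m - b) + b := by ring
  rw [this, HahnSeries.coeff_mul_single_add]
  ring_nf

lemma aux_coeff_sum {R : Type*} [CommRing R] {ι : Type*} (s : Finset ι)
    (f : ι → HahnSeries ℤ R) (m : ℤ) :
    (∑ x ∈ s, f x).coeff m = ∑ x ∈ s, (f x).coeff m :=
  map_sum (HahnSeries.coeff.addMonoidHom m) f s

set_option maxHeartbeats 1000000 in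
theorem stmt_12 (p rr q : ℕ) (hp : p.Prime) (hpodd : Odd p) (hrr : 0 < rr) (hq : q = p ^ rr)
    (Fq : Type*) [Field Fq] [Fintype Fq] (hcard : Fintype.card Fq = q)
    (r l : ℕ) (hl : l ≤ q - 2)
    (a a' : ℕ → Polynomial Fq) (ha0 : a 0 = 1) (ha'0 : a' 0 = 1)
    (f₀ finv : LaurentSeries (Polynomial Fq))
    (hmulinv : f₀ * finv = 1)
    (hf₀ : ∀ i : ℕ, f₀.coeff (((q : ℤ) - 1) * ((r : ℤ) + i) + l) = a i)
    (hf₀0 : ∀ n : ℤ, (¬ ∃ i : ℕ, n = ((q : ℤ) - 1) * ((r : ℤ) + i) + l) → f₀.coeff n = 0)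
    (hfinv : ∀ i : ℕ, finv.coeff (((q : ℤ) - 1) * (-(r : ℤ) + i) - l) = a' i)
    (hfinv0 : ∀ n : ℤ,
      (¬ ∃ i : ℕ, n = ((q : ℤ) - 1) * (-(r : ℤ) + i) - l) → finv.coeff n = 0)
    (fi g : ℕ → LaurentSeries (Polynomial Fq))
    (hfi : ∀ i : ℕ, (fi i).coeff (((q : ℤ) - 1) * ((r : ℤ) - i) + l) = 1 ∧
      ∀ n : ℤ, n ≠ ((q : ℤ) - 1) * ((r : ℤ) - i) + l →
        n < ((q : ℤ) - 1) * ((r : ℤ) + 1) + l → (fi i).coeff n = 0)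
    (hg : ∀ s : ℕ, (g s).coeff (-(s : ℤ) * ((q : ℤ) - 1)) = 1 ∧
      ∀ n : ℤ, n ≠ -(s : ℤ) * ((q : ℤ) - 1) → n < (q : ℤ) - 1 → (g s).coeff n = 0)
    (huniq : ∀ i : ℕ, ∀ h ∈ Submodule.span (Polynomial Fq) (Set.range fi),
      (h.coeff (((q : ℤ) - 1) * ((r : ℤ) - i) + l) = 1 ∧
        ∀ n : ℤ, n ≠ ((q : ℤ) - 1) * ((r : ℤ) - i) + l →
          n < ((q : ℤ) - 1) * ((r : ℤ) + 1) + l → h.coeff n = 0) → h = fi i)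
    (hclosed : ∀ s : ℕ, f₀ * g s ∈ Submodule.span (Polynomial Fq) (Set.range fi)) :
    ∀ i : ℕ, fi i = f₀ * ∑ n ∈ Finset.range (i + 1), a' n • g (i - n) := by
  set D : ℤ := (q : ℤ) - 1 with hD
  have hq2 : 2 ≤ q := by
    have : 1 < p ^ rr := Nat.one_lt_pow hrr.ne' hp.one_lt
    omega
  have hD1 : (1 : ℤ) ≤ D := by simp only [hD]; omega
  have hD0 : (0 : ℤ) < D := by omega
  have hlD : (l : ℤ) < D := by
    have : l + 2 ≤ q := by omega
    have : (l : ℤ) + 2 ≤ (q : ℤ) := by exact_mod_cast this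
    omega
  -- low vanishing for f₀
  have hf₀low : ∀ n < D * r + l, f₀.coeff n = 0 := by
    intro n hn
    apply hf₀0
    rintro ⟨i, rfl⟩
    have h1 : (0 : ℤ) ≤ (i : ℤ) := Int.natCast_nonneg i
    nlinarith
  -- coefficient of f₀ * g s in low range
  have keyC : ∀ s : ℕ, ∀ m : ℤ, m < D * ((r : ℤ) + 1) + l →
      (f₀ * g s).coeff m = f₀.coeff (m + s * D) := by
    intro s m hm
    have hsplit : f₀ * g s = f₀ * HahnSeries.single (-(s : ℤ) * D) (1 : Polynomial Fq)
        + f₀ * (g s - HahnSeries.single (-(s : ℤ) * D) (1 : Polynomial Fq)) := by ring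
    have htail : ∀ n < D, (g s - HahnSeries.single (-(s : ℤ) * D) (1 : Polynomial Fq)).coeff n
        = 0 := by
      intro n hn
      rw [HahnSeries.coeff_sub]
      by_cases hns : n = -(s : ℤ) * D
      · rw [hns, (hg s).1, HahnSeries.coeff_single_same]; ring
      · rw [(hg s).2 n hns hn, HahnSeries.coeff_single_of_ne hns]; ring
    have hzero : (f₀ * (g s - HahnSeries.single (-(s : ℤ) * D) (1 : Polynomial Fq))).coeff m
        = 0 := by
      refine aux_mul_coeff_low f₀ _ (D * r + l) D hf₀low htail m ?_
      nlinarith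
    rw [hsplit, HahnSeries.coeff_add, hzero, add_zero, aux_mul_single_coeff, mul_one]
    congr 1
    ring
  -- convolution identity
  have keyD : ∀ k : ℕ, (∑ n ∈ Finset.range (k + 1), a (k - n) * a' n)
      = if k = 0 then 1 else 0 := by
    intro k
    set P : LaurentSeries (Polynomial Fq) :=
      ∑ n ∈ Finset.range (k + 1), HahnSeries.single (D * (-(r : ℤ) + n) - l) (a' n) with hP
    have hPcoeff : ∀ m : ℤ, P.coeff m
        = ∑ n ∈ Finset.range (k + 1),
            (if m = D * (-(r : ℤ) + n) - l then a' n else 0) := by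
      intro m
      rw [hP, aux_coeff_sum]
      refine Finset.sum_congr rfl fun n _ => ?_
      by_cases h : m = D * (-(r : ℤ) + n) - l
      · rw [if_pos h, h, HahnSeries.coeff_single_same]
      · rw [if_neg h, HahnSeries.coeff_single_of_ne h]
    have htail : ∀ n < D * (-(r : ℤ) + ((k : ℤ) + 1)) - l, (finv - P).coeff n = 0 := by
      intro n hn
      rw [HahnSeries.coeff_sub, hPcoeff]
      by_cases hex : ∃ j : ℕ, n = D * (-(r : ℤ) + j) - l
      · obtain ⟨j, rfl⟩ := hex
        have hjk : (j : ℤ) < (k : ℤ) + 1 := by nlinarith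
        have hjk' : j ∈ Finset.range (k + 1) := by
          rw [Finset.mem_range]; exact_mod_cast hjk
        rw [hfinv j, Finset.sum_eq_single_of_mem j hjk']
        · simp
        · intro b _ hbj
          have : D * (-(r : ℤ) + j) - l ≠ D * (-(r : ℤ) + b) - l := by
            intro hcon
            apply hbj
            have : (j : ℤ) = (b : ℤ) := by nlinarith [sub_eq_zero.mpr hcon]
            exact_mod_cast this.symm
          rw [if_neg this]
      · rw [hfinv0 n hex]
        have : ∀ n' ∈ Finset.range (k + 1),
            (if n = D * (-(r : ℤ) + n') - l then a' n' else 0) = 0 := by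
          intro n' _
          rw [if_neg]
          intro hcon
          exact hex ⟨n', hcon⟩
        rw [Finset.sum_congr rfl this, Finset.sum_const_zero]
        ring
    have hzero : (f₀ * (finv - P)).coeff (D * k) = 0 := by
      refine aux_mul_coeff_low f₀ _ (D * r + l) (D * (-(r : ℤ) + ((k : ℤ) + 1)) - l)
        hf₀low htail (D * k) ?_
      nlinarith
    have hsplit : f₀ * finv = f₀ * P + f₀ * (finv - P) := by ring
    have hcoeffP : (f₀ * P).coeff (D * k)
        = ∑ n ∈ Finset.range (k + 1), a (k - n) * a' n := by
      rw [hP, Finset.mul_sum, aux_coeff_sum]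
      refine Finset.sum_congr rfl fun n hn => ?_
      rw [aux_mul_single_coeff]
      congr 1
      have hnk : n ≤ k := by rw [Finset.mem_range] at hn; omega
      have hcast : ((k - n : ℕ) : ℤ) = (k : ℤ) - n := by
        rw [Nat.cast_sub hnk]
      have : D * (k : ℤ) - (D * (-(r : ℤ) + n) - l) = D * ((r : ℤ) + ((k - n : ℕ) : ℤ)) + l := by
        rw [hcast]; ring
      rw [this, hf₀ (k - n)]
    have h1 : (f₀ * finv).coeff (D * k) = (if k = 0 then 1 else 0 : Polynomial Fq) := by
      rw [hmulinv, HahnSeries.coeff_one]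
      by_cases hk : k = 0
      · rw [if_pos hk, if_pos (by rw [hk]; ring)]
      · rw [if_neg hk, if_neg]
        intro hcon
        have hk0 : (k : ℤ) ≠ 0 := by exact_mod_cast hk
        have : D * (k : ℤ) ≠ 0 := mul_ne_zero (by omega) hk0
        exact this hcon
    rw [hsplit, HahnSeries.coeff_add, hzero, add_zero, hcoeffP] at h1
    exact h1
  -- main argument
  intro i
  have hsmul : ∀ (c : Polynomial Fq) (x : LaurentSeries (Polynomial Fq)),
      f₀ * (c • x) = c • (f₀ * x) := by
    intro c x
    rw [← HahnSeries.single_zero_mul_eq_smul, ← HahnSeries.single_zero_mul_eq_smul]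
    ring
  set S : LaurentSeries (Polynomial Fq) := ∑ n ∈ Finset.range (i + 1), a' n • g (i - n)
    with hS
  have hmem : f₀ * S ∈ Submodule.span (Polynomial Fq) (Set.range fi) := by
    rw [hS, Finset.mul_sum]
    refine Submodule.sum_mem _ fun n _ => ?_
    rw [hsmul]
    exact Submodule.smul_mem _ _ (hclosed (i - n))
  have hcoeffS : ∀ m : ℤ, m < D * ((r : ℤ) + 1) + l → (f₀ * S).coeff m
      = ∑ n ∈ Finset.range (i + 1), a' n * f₀.coeff (m + ((i - n : ℕ) : ℤ) * D) := by
    intro m hm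
    rw [hS, Finset.mul_sum, aux_coeff_sum]
    refine Finset.sum_congr rfl fun n _ => ?_
    rw [hsmul, HahnSeries.coeff_smul, smul_eq_mul, keyC (i - n) m hm]
  have hthresh : D * ((r : ℤ) - i) + l < D * ((r : ℤ) + 1) + l := by
    have : (0 : ℤ) ≤ (i : ℤ) := Int.natCast_nonneg i
    nlinarith
  have hc1 : (f₀ * S).coeff (D * ((r : ℤ) - i) + l) = 1 := by
    rw [hcoeffS _ hthresh]
    rw [Finset.sum_eq_single_of_mem 0 (Finset.mem_range.mpr (by omega))]
    · have hcast : ((i - 0 : ℕ) : ℤ) = (i : ℤ) := by norm_num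
      have : D * ((r : ℤ) - i) + l + ((i - 0 : ℕ) : ℤ) * D = D * ((r : ℤ) + (0 : ℕ)) + l := by
        rw [hcast]; push_cast; ring
      rw [this, hf₀ 0, ha0, ha'0, mul_one]
    · intro n hn hn0
      have hni : n ≤ i := by rw [Finset.mem_range] at hn; omega
      have hcast : ((i - n : ℕ) : ℤ) = (i : ℤ) - n := by rw [Nat.cast_sub hni]
      have hzero : f₀.coeff (D * ((r : ℤ) - i) + l + ((i - n : ℕ) : ℤ) * D) = 0 := by
        apply hf₀0
        rintro ⟨j, hj⟩
        rw [hcast] at hj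
        have hn0' : (0 : ℤ) < (n : ℤ) := by exact_mod_cast Nat.pos_of_ne_zero hn0
        have hj0 : (0 : ℤ) ≤ (j : ℤ) := Int.natCast_nonneg j
        nlinarith [sub_eq_zero.mpr hj]
      rw [hzero, mul_zero]
  have hc2 : ∀ n' : ℤ, n' ≠ D * ((r : ℤ) - i) + l → n' < D * ((r : ℤ) + 1) + l →
      (f₀ * S).coeff n' = 0 := by
    intro m hne hlt
    rw [hcoeffS m hlt]
    by_cases hex : ∃ t : ℤ, m = D * ((r : ℤ) + t) + l
    · obtain ⟨t, rfl⟩ := hex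
      have ht1 : t < 1 := by nlinarith
      have hti : t ≠ -(i : ℤ) := by
        intro hcon
        apply hne
        rw [hcon]; ring
      set k : ℤ := t + i with hk
      have hterm : ∀ n : ℕ, n ≤ i →
          D * ((r : ℤ) + t) + l + ((i - n : ℕ) : ℤ) * D = D * ((r : ℤ) + (k - n)) + l := by
        intro n hni
        rw [Nat.cast_sub hni, hk]; ring
      by_cases hkneg : k < 0
      · refine Finset.sum_eq_zero fun n hn => ?_
        have hni : n ≤ i := by rw [Finset.mem_range] at hn; omega
        rw [hterm n hni]
        have : f₀.coeff (D * ((r : ℤ) + (k - n)) + l) = 0 := by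
          apply hf₀0
          rintro ⟨j, hj⟩
          have hj0 : (0 : ℤ) ≤ (j : ℤ) := Int.natCast_nonneg j
          have hn0 : (0 : ℤ) ≤ (n : ℤ) := Int.natCast_nonneg n
          nlinarith [sub_eq_zero.mpr hj]
        rw [this, mul_zero]
      · push_neg at hkneg
        set k' : ℕ := k.toNat with hk'
        have hk'k : (k' : ℤ) = k := Int.toNat_of_nonneg hkneg
        have hk'i : k' ≤ i := by omega
        have hk'0 : k' ≠ 0 := by
          intro hcon
          apply hti
          have : k = 0 := by omega
          omega
        have hsub : Finset.range (k' + 1) ⊆ Finset.range (i + 1) :=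
          Finset.range_subset_range.mpr (by omega)
        have hvanish : ∀ n ∈ Finset.range (i + 1), n ∉ Finset.range (k' + 1) →
            a' n * f₀.coeff (D * ((r : ℤ) + t) + l + ((i - n : ℕ) : ℤ) * D) = 0 := by
          intro n hn hn'
          have hni : n ≤ i := by rw [Finset.mem_range] at hn; omega
          have hnk : k' < n := by rw [Finset.mem_range] at hn'; omega
          rw [hterm n hni]
          have : f₀.coeff (D * ((r : ℤ) + (k - n)) + l) = 0 := by
            apply hf₀0
            rintro ⟨j, hj⟩
            have hj0 : (0 : ℤ) ≤ (j : ℤ) := Int.natCast_nonneg j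
            have hnk' : (k' : ℤ) < (n : ℤ) := by exact_mod_cast hnk
            nlinarith [sub_eq_zero.mpr hj]
          rw [this, mul_zero]
        rw [← Finset.sum_subset hsub hvanish]
        have heq : ∀ n ∈ Finset.range (k' + 1),
            a' n * f₀.coeff (D * ((r : ℤ) + t) + l + ((i - n : ℕ) : ℤ) * D)
            = a (k' - n) * a' n := by
          intro n hn
          have hnk : n ≤ k' := by rw [Finset.mem_range] at hn; omega
          have hni : n ≤ i := le_trans hnk hk'i
          rw [hterm n hni]
          have : D * ((r : ℤ) + (k - n)) + l = D * ((r : ℤ) + ((k' - n : ℕ) : ℤ)) + l := by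
            rw [Nat.cast_sub hnk, hk'k]
          rw [this, hf₀ (k' - n), mul_comm]
        rw [Finset.sum_congr rfl heq, keyD k', if_neg hk'0]
    · refine Finset.sum_eq_zero fun n hn => ?_
      have hni : n ≤ i := by rw [Finset.mem_range] at hn; omega
      have : f₀.coeff (m + ((i - n : ℕ) : ℤ) * D) = 0 := by
        apply hf₀0
        rintro ⟨j, hj⟩
        apply hex
        exact ⟨(j : ℤ) - ((i - n : ℕ) : ℤ), by linarith [hj]⟩
      rw [this, mul_zero]
  exact (huniq i (f₀ * S) hmem ⟨hc1, hc2⟩).symm
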